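/- For every τ ∈ ℝ, ∫₀^∞ x^{−2} e^{−x} (1 − cos(τx)) dx = τ · arctan(τ) − (1/2) · ln(1 + τ²). -/

import Mathlib

open MeasureTheory Real Set Filter

lemma aux_one_sub_cos_le (u : ℝ) : 1 - Real.cos u ≤ u ^ 2 / 2 := by
  have h1 : Real.cos u = Real.cos (u/2) ^ 2 - Real.sin (u/2) ^ 2 := by
    have := Real.cos_two_mul' (u/2)
    rwa [mul_div_cancel₀ _ (two_ne_zero' ℝ)] at this
  have h2 : Real.sin (u/2) ^ 2 ≤ (u/2) ^ 2 := Real.sin_sq_le_sq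
  have h3 := Real.sin_sq_add_cos_sq (u/2)
  nlinarith

lemma aux_abs_sin_le (u : ℝ) : |Real.sin u| ≤ |u| := Real.abs_sin_le_abs

lemma exp_integrableOn : IntegrableOn (fun x => Real.exp (-x)) (Set.Ioi (0:ℝ)) := by
  simpa using exp_neg_integrableOn_Ioi 0 (one_pos)

lemma cos_integrableOn (τ : ℝ) :
    IntegrableOn (fun x => Real.exp (-x) * Real.cos (τ*x)) (Set.Ioi (0:ℝ)) := by
  refine exp_integrableOn.mono' ?_ ?_
  · exact (Real.continuous_exp.comp continuous_neg |>.mul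
      (Real.continuous_cos.comp (continuous_const.mul continuous_id))).aestronglyMeasurable
  · filter_upwards with x
    rw [norm_mul, Real.norm_eq_abs, Real.norm_eq_abs, abs_of_pos (Real.exp_pos _)]
    nlinarith [Real.abs_cos_le_one (τ*x), Real.exp_pos (-x), abs_nonneg (Real.cos (τ*x))]

lemma cos_integral (τ : ℝ) :
    ∫ x in Set.Ioi (0:ℝ), Real.exp (-x) * Real.cos (τ*x) = 1/(1+τ^2) := by
  have hpos : (0:ℝ) < 1 + τ^2 := by positivity
  set f : ℝ → ℝ := fun x => Real.exp (-x) * (τ * Real.sin (τ*x) - Real.cos (τ*x)) / (1+τ^2)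
    with hf
  have hderiv : ∀ x ∈ Set.Ici (0:ℝ), HasDerivAt f (Real.exp (-x) * Real.cos (τ*x)) x := by
    intro x _
    have h1 : HasDerivAt (fun x : ℝ => Real.exp (-x)) (-Real.exp (-x)) x := by
      simpa [Function.comp_def] using (Real.hasDerivAt_exp (-x)).comp x (hasDerivAt_neg x)
    have hsin : HasDerivAt (fun x : ℝ => Real.sin (τ*x)) (Real.cos (τ*x) * τ) x :=
      by simpa [Function.comp_def] using (Real.hasDerivAt_sin (τ*x)).comp x ((hasDerivAt_id x).const_mul τ)
    have hcos : HasDerivAt (fun x : ℝ => Real.cos (τ*x)) (-Real.sin (τ*x) * τ) x :=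
      by simpa [Function.comp_def] using (Real.hasDerivAt_cos (τ*x)).comp x ((hasDerivAt_id x).const_mul τ)
    have h2 := ((hsin.const_mul τ).sub hcos)
    have h3 := (h1.mul h2).div_const (1+τ^2)
    refine h3.congr_deriv ?_
    simp only [Pi.sub_apply]
    rw [div_eq_iff hpos.ne']
    ring
  have htend : Tendsto f atTop (nhds 0) := by
    have hb : Tendsto (fun x : ℝ => Real.exp (-x) * ((|τ|+1) / (1+τ^2))) atTop (nhds 0) := by
      simpa using (Real.tendsto_exp_neg_atTop_nhds_zero.mul_const ((|τ|+1) / (1+τ^2)))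
    refine squeeze_zero_norm (fun x => ?_) hb
    rw [hf]
    simp only [Real.norm_eq_abs, abs_div, abs_mul, abs_of_pos (Real.exp_pos _),
      abs_of_pos hpos]
    have hab : |τ * Real.sin (τ*x) - Real.cos (τ*x)| ≤ |τ| + 1 := by
      calc |τ * Real.sin (τ*x) - Real.cos (τ*x)| ≤ |τ * Real.sin (τ*x)| + |Real.cos (τ*x)| :=
            abs_sub _ _
        _ ≤ |τ| + 1 := by
            rw [abs_mul]
            have := Real.abs_sin_le_one (τ*x)
            have := Real.abs_cos_le_one (τ*x)
            nlinarith [abs_nonneg τ]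
    rw [mul_div_assoc]
    gcongr
  have := MeasureTheory.integral_Ioi_of_hasDerivAt_of_tendsto' hderiv (cos_integrableOn τ) htend
  rw [this, hf]
  simp
  field_simp

lemma sin_meas (τ : ℝ) :
    AEStronglyMeasurable (fun x => Real.exp (-x) * Real.sin (τ*x) / x)
      (volume.restrict (Set.Ioi (0:ℝ))) := by
  refine (ContinuousOn.aestronglyMeasurable ?_ measurableSet_Ioi)
  apply ContinuousOn.div
  · exact ((Real.continuous_exp.comp continuous_neg).mul
      (Real.continuous_sin.comp (continuous_const.mul continuous_id))).continuousOn
  · exact continuousOn_id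
  · intro x hx; exact ne_of_gt hx

lemma sin_integrableOn (τ : ℝ) :
    IntegrableOn (fun x => Real.exp (-x) * Real.sin (τ*x) / x) (Set.Ioi (0:ℝ)) := by
  refine (exp_integrableOn.const_mul |τ|).mono' (sin_meas τ) ?_
  rw [MeasureTheory.ae_restrict_iff' measurableSet_Ioi]
  filter_upwards with x hx
  rw [Set.mem_Ioi] at hx
  rw [norm_div, norm_mul, Real.norm_eq_abs, Real.norm_eq_abs, Real.norm_eq_abs,
    abs_of_pos (Real.exp_pos _), abs_of_pos hx, div_le_iff₀ hx]
  have h1 : |Real.sin (τ*x)| ≤ |τ| * x := by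
    calc |Real.sin (τ*x)| ≤ |τ*x| := Real.abs_sin_le_abs
      _ = |τ| * x := by rw [abs_mul, abs_of_pos hx]
  nlinarith [Real.exp_pos (-x), abs_nonneg (Real.sin (τ*x))]

lemma sin_hasDeriv (τ₀ : ℝ) :
    HasDerivAt (fun τ => ∫ x in Set.Ioi (0:ℝ), Real.exp (-x) * Real.sin (τ*x) / x)
      (1/(1+τ₀^2)) τ₀ := by
  have key := hasDerivAt_integral_of_dominated_loc_of_deriv_le (μ := volume.restrict (Set.Ioi (0:ℝ)))
      (F := fun τ x => Real.exp (-x) * Real.sin (τ*x) / x)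
      (F' := fun τ x => Real.exp (-x) * Real.cos (τ*x))
      (bound := fun x => Real.exp (-x)) (x₀ := τ₀) (Metric.ball_mem_nhds τ₀ one_pos)
      (Filter.Eventually.of_forall fun τ => sin_meas τ)
      (sin_integrableOn τ₀)
      ((cos_integrableOn τ₀).aestronglyMeasurable)
      ?_ exp_integrableOn ?_
  · rcases key with ⟨-, h⟩
    rwa [cos_integral τ₀] at h
  · filter_upwards with x
    intro τ _
    rw [norm_mul, Real.norm_eq_abs, Real.norm_eq_abs, abs_of_pos (Real.exp_pos _)]
    nlinarith [Real.abs_cos_le_one (τ*x), Real.exp_pos (-x), abs_nonneg (Real.cos (τ*x))]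
  · rw [MeasureTheory.ae_restrict_iff' measurableSet_Ioi]
    filter_upwards with x hx
    rw [Set.mem_Ioi] at hx
    intro τ _
    have hsin : HasDerivAt (fun τ : ℝ => Real.sin (τ*x)) (Real.cos (τ*x) * x) τ := by
      simpa [Function.comp_def] using (Real.hasDerivAt_sin (τ*x)).comp τ ((hasDerivAt_id τ).mul_const x)
    have h := (hsin.const_mul (Real.exp (-x))).div_const x
    refine h.congr_deriv ?_
    rw [mul_div_assoc, mul_div_cancel_right₀ _ hx.ne']

lemma sin_integral (τ : ℝ) :
    ∫ x in Set.Ioi (0:ℝ), Real.exp (-x) * Real.sin (τ*x) / x = Real.arctan τ := by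
  have hG0 : (∫ x in Set.Ioi (0:ℝ), Real.exp (-x) * Real.sin (0*x) / x) = 0 := by
    simp
  have h1 : ∫ t in (0:ℝ)..τ, 1/(1+t^2) =
      (∫ x in Set.Ioi (0:ℝ), Real.exp (-x) * Real.sin (τ*x) / x) -
      (∫ x in Set.Ioi (0:ℝ), Real.exp (-x) * Real.sin (0*x) / x) := by
    refine intervalIntegral.integral_eq_sub_of_hasDerivAt (fun t _ => sin_hasDeriv t) ?_
    apply Continuous.intervalIntegrable
    have : ∀ t : ℝ, (0:ℝ) < 1 + t^2 := fun t => by positivity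
    exact continuous_const.div (by continuity) (fun t => ne_of_gt (this t))
  have h2 : ∫ t in (0:ℝ)..τ, 1/(1+t^2) = Real.arctan τ := by
    simpa using integral_one_div_one_add_sq (a := 0) (b := τ)
  rw [hG0, sub_zero] at h1
  rw [← h1, h2]

lemma F_meas (τ : ℝ) :
    AEStronglyMeasurable (fun x => Real.exp (-x) * (1 - Real.cos (τ*x)) / x ^ 2)
      (volume.restrict (Set.Ioi (0:ℝ))) := by
  refine (ContinuousOn.aestronglyMeasurable ?_ measurableSet_Ioi)
  apply ContinuousOn.div
  · exact ((Real.continuous_exp.comp continuous_neg).mul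
      (continuous_const.sub (Real.continuous_cos.comp (continuous_const.mul continuous_id)))).continuousOn
  · exact (continuous_pow 2).continuousOn
  · intro x hx; exact pow_ne_zero 2 (ne_of_gt hx)

lemma F_integrableOn (τ : ℝ) :
    IntegrableOn (fun x => Real.exp (-x) * (1 - Real.cos (τ*x)) / x ^ 2) (Set.Ioi (0:ℝ)) := by
  refine (exp_integrableOn.const_mul (τ^2/2)).mono' (F_meas τ) ?_
  rw [MeasureTheory.ae_restrict_iff' measurableSet_Ioi]
  filter_upwards with x hx
  rw [Set.mem_Ioi] at hx
  have hx2 : (0:ℝ) < x^2 := by positivity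
  have hcos : 0 ≤ 1 - Real.cos (τ*x) := by nlinarith [Real.cos_le_one (τ*x)]
  have hb : 1 - Real.cos (τ*x) ≤ (τ*x)^2/2 := aux_one_sub_cos_le (τ*x)
  rw [Real.norm_eq_abs, abs_div, abs_mul, abs_of_pos (Real.exp_pos _), abs_of_nonneg hcos,
    abs_of_pos hx2, div_le_iff₀ hx2]
  have := Real.exp_pos (-x)
  nlinarith

lemma F_hasDeriv (τ₀ : ℝ) :
    HasDerivAt (fun τ => ∫ x in Set.Ioi (0:ℝ), Real.exp (-x) * (1 - Real.cos (τ*x)) / x ^ 2)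
      (Real.arctan τ₀) τ₀ := by
  have key := hasDerivAt_integral_of_dominated_loc_of_deriv_le (μ := volume.restrict (Set.Ioi (0:ℝ)))
      (F := fun τ x => Real.exp (-x) * (1 - Real.cos (τ*x)) / x ^ 2)
      (F' := fun τ x => Real.exp (-x) * Real.sin (τ*x) / x)
      (bound := fun x => Real.exp (-x) * (|τ₀| + 1)) (x₀ := τ₀) (Metric.ball_mem_nhds τ₀ one_pos)
      (Filter.Eventually.of_forall fun τ => F_meas τ)
      (F_integrableOn τ₀)
      ((sin_integrableOn τ₀).aestronglyMeasurable)
      ?_ (exp_integrableOn.mul_const _) ?_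
  · rcases key with ⟨-, h⟩
    rwa [sin_integral τ₀] at h
  · rw [MeasureTheory.ae_restrict_iff' measurableSet_Ioi]
    filter_upwards with x hx
    rw [Set.mem_Ioi] at hx
    intro τ hτ
    rw [Metric.mem_ball, Real.dist_eq] at hτ
    have hτabs : |τ| ≤ |τ₀| + 1 := by
      have := abs_sub_abs_le_abs_sub τ τ₀
      linarith
    rw [norm_div, norm_mul, Real.norm_eq_abs, Real.norm_eq_abs, Real.norm_eq_abs,
      abs_of_pos (Real.exp_pos _), abs_of_pos hx, div_le_iff₀ hx]
    have h1 : |Real.sin (τ*x)| ≤ |τ| * x := by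
      calc |Real.sin (τ*x)| ≤ |τ*x| := Real.abs_sin_le_abs
        _ = |τ| * x := by rw [abs_mul, abs_of_pos hx]
    have := Real.exp_pos (-x)
    nlinarith [mul_le_mul_of_nonneg_left h1 this.le,
      mul_le_mul_of_nonneg_left (mul_le_mul_of_nonneg_right hτabs hx.le) this.le]
  · rw [MeasureTheory.ae_restrict_iff' measurableSet_Ioi]
    filter_upwards with x hx
    rw [Set.mem_Ioi] at hx
    intro τ _
    have hcos : HasDerivAt (fun τ : ℝ => 1 - Real.cos (τ*x)) (Real.sin (τ*x) * x) τ := by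
      have : HasDerivAt (fun τ : ℝ => Real.cos (τ*x)) (-Real.sin (τ*x) * x) τ := by
        simpa [Function.comp_def] using (Real.hasDerivAt_cos (τ*x)).comp τ ((hasDerivAt_id τ).mul_const x)
      simpa using (this.const_sub 1)
    have h := (hcos.const_mul (Real.exp (-x))).div_const (x^2)
    refine h.congr_deriv ?_
    rw [eq_div_iff hx.ne', div_mul_eq_mul_div, div_eq_iff (pow_ne_zero 2 hx.ne')]
    ring

/-- The case `q = −1`: `∫₀^∞ x^{−2} e^{−x}(1 − cos(τx)) dx = τ·arctan τ − (1/2)ln(1+τ²)`. -/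
theorem stmt11 (τ : ℝ) :
    ∫ x in Set.Ioi (0:ℝ), Real.exp (-x) * (1 - Real.cos (τ * x)) / x ^ 2 =
      τ * Real.arctan τ - (1/2) * Real.log (1 + τ^2) := by
  have hF0 : (∫ x in Set.Ioi (0:ℝ), Real.exp (-x) * (1 - Real.cos (0*x)) / x ^ 2) = 0 := by
    simp
  have harctan_int : IntervalIntegrable Real.arctan volume 0 τ :=
    Real.continuous_arctan.intervalIntegrable 0 τ
  have h1 : ∫ t in (0:ℝ)..τ, Real.arctan t =
      (∫ x in Set.Ioi (0:ℝ), Real.exp (-x) * (1 - Real.cos (τ*x)) / x ^ 2) -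
      (∫ x in Set.Ioi (0:ℝ), Real.exp (-x) * (1 - Real.cos (0*x)) / x ^ 2) :=
    intervalIntegral.integral_eq_sub_of_hasDerivAt (fun t _ => F_hasDeriv t) harctan_int
  have hA : ∀ t : ℝ, HasDerivAt (fun t : ℝ => t * Real.arctan t - (1/2) * Real.log (1 + t^2))
      (Real.arctan t) t := by
    intro t
    have hpos : (0:ℝ) < 1 + t^2 := by positivity
    have h2 : HasDerivAt (fun t : ℝ => t * Real.arctan t)
        (1 * Real.arctan t + t * (1/(1+t^2))) t :=
      (hasDerivAt_id t).mul (Real.hasDerivAt_arctan t)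
    have h3 : HasDerivAt (fun t : ℝ => 1 + t^2) (2*t) t := by
      simpa using ((hasDerivAt_pow 2 t).const_add 1)
    have h4 : HasDerivAt (fun t : ℝ => Real.log (1 + t^2)) ((1+t^2)⁻¹ * (2*t)) t :=
      by have := (Real.hasDerivAt_log (ne_of_gt hpos)).comp t h3; exact this
    have h5 := h2.sub (h4.const_mul (1/2))
    refine h5.congr_deriv ?_
    ring
  have h2 : ∫ t in (0:ℝ)..τ, Real.arctan t =
      (τ * Real.arctan τ - (1/2) * Real.log (1 + τ^2)) -
      ((0:ℝ) * Real.arctan 0 - (1/2) * Real.log (1 + (0:ℝ)^2)) :=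
    intervalIntegral.integral_eq_sub_of_hasDerivAt (fun t _ => hA t) harctan_int
  rw [hF0, sub_zero] at h1
  rw [← h1, h2]
  simp
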